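/- arXiv:1811.03591 — 5 statements merged into one kernel-verified Lean document; each statement's English description precedes it below -/
import Mathlib

section
/- Let X ⊆ ℝ^n and let f : X → ℝ^m be a bi-Lipschitz map with distortion at most D. Then there exists an outer extension f' : ℝ^n → ℝ^{n+m} of f (i.e., f'(x) = (f(x), 0, …, 0) for every x ∈ X) whose distortion is at most 3D. -/
set_option linter.unusedSectionVars false

open Finset

section Kirszbraun

variable {E : Type*} [NormedAddCommGroup E] [InnerProductSpace ℝ E]
variable {F : Type*} [NormedAddCommGroup F] [InnerProductSpace ℝ F]

lemma continuous_finset_sup'_apply {ι : Type*} {s : Finset ι} (hne : s.Nonempty)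
    (f : ι → F → ℝ) (hf : ∀ i, Continuous (f i)) :
    Continuous fun y => s.sup' hne fun i => f i y := by
  induction hne using Finset.Nonempty.cons_induction with
  | singleton a => simpa using hf a
  | cons a s h hs ih =>
    exact ((hf a).max ih).congr fun y => (Finset.sup'_cons hs (fun i => f i y)).symm

/-- Real polarization: inner product from norms. -/
lemma real_inner_eq_norms (a b : F) :
    (inner ℝ a b : ℝ) = (‖a‖ ^ 2 + ‖b‖ ^ 2 - ‖a - b‖ ^ 2) / 2 := by
  have := norm_sub_sq_real a b
  linarith

/-- Key quadratic identity for barycentric combinations. -/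
lemma sum_sum_norm_sub_sq {ι : Type*} (J : Finset ι) (w : ι → ℝ) (v : ι → F)
    (hw : ∑ z ∈ J, w z = 1) :
    ∑ z ∈ J, ∑ z' ∈ J, (w z * w z') * ‖v z - v z'‖ ^ 2
      = 2 * (∑ z ∈ J, w z * ‖v z‖ ^ 2) - 2 * ‖∑ z ∈ J, w z • v z‖ ^ 2 := by
  have hS : ‖∑ z ∈ J, w z • v z‖ ^ 2
      = ∑ z ∈ J, ∑ z' ∈ J, (w z * w z') * (inner ℝ (v z) (v z') : ℝ) := by
    rw [← real_inner_self_eq_norm_sq, sum_inner]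
    refine Finset.sum_congr rfl fun z hz => ?_
    rw [real_inner_smul_left, inner_sum, Finset.mul_sum]
    refine Finset.sum_congr rfl fun z' hz' => ?_
    rw [real_inner_smul_right]; ring
  have expand : ∀ z z', ‖v z - v z'‖ ^ 2
      = ‖v z‖ ^ 2 + ‖v z'‖ ^ 2 - 2 * (inner ℝ (v z) (v z') : ℝ) := by
    intro z z'; have := norm_sub_sq_real (v z) (v z'); linarith
  have : ∑ z ∈ J, ∑ z' ∈ J, (w z * w z') * ‖v z - v z'‖ ^ 2
      = ∑ z ∈ J, ∑ z' ∈ J, ((w z * w z') * ‖v z‖ ^ 2 + (w z * w z') * ‖v z'‖ ^ 2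
          - 2 * ((w z * w z') * (inner ℝ (v z) (v z') : ℝ))) := by
    refine Finset.sum_congr rfl fun z _ => Finset.sum_congr rfl fun z' _ => ?_
    rw [expand]; ring
  rw [this]
  have h1 : ∀ z ∈ J, ∑ z' ∈ J, ((w z * w z') * ‖v z‖ ^ 2 + (w z * w z') * ‖v z'‖ ^ 2
          - 2 * ((w z * w z') * (inner ℝ (v z) (v z') : ℝ)))
      = w z * ‖v z‖ ^ 2 + w z * (∑ z' ∈ J, w z' * ‖v z'‖ ^ 2)
          - 2 * (∑ z' ∈ J, (w z * w z') * (inner ℝ (v z) (v z') : ℝ)) := by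
    intro z _
    rw [Finset.sum_sub_distrib, Finset.sum_add_distrib]
    have e1 : ∑ z' ∈ J, (w z * w z') * ‖v z‖ ^ 2 = w z * ‖v z‖ ^ 2 := by
      have : ∑ z' ∈ J, (w z * w z') * ‖v z‖ ^ 2 = (w z * ‖v z‖ ^ 2) * ∑ z' ∈ J, w z' := by
        rw [Finset.mul_sum]; exact Finset.sum_congr rfl fun z' _ => by ring
      rw [this, hw]; ring
    have e2 : ∑ z' ∈ J, (w z * w z') * ‖v z'‖ ^ 2 = w z * ∑ z' ∈ J, w z' * ‖v z'‖ ^ 2 := by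
      rw [Finset.mul_sum]; exact Finset.sum_congr rfl fun z' _ => by ring
    have e3 : ∑ z' ∈ J, 2 * ((w z * w z') * (inner ℝ (v z) (v z') : ℝ))
        = 2 * ∑ z' ∈ J, (w z * w z') * (inner ℝ (v z) (v z') : ℝ) := by
      rw [Finset.mul_sum]
    rw [e1, e2, e3]
  rw [Finset.sum_congr rfl h1, Finset.sum_sub_distrib, Finset.sum_add_distrib, ← Finset.sum_mul,
    ← Finset.mul_sum, hw, hS]
  ring

lemma kirszbraun_onePoint_finset [FiniteDimensional ℝ F]
    (s : Finset (E × F)) (hs : ∀ p ∈ s, ∀ q ∈ s, ‖p.2 - q.2‖ ≤ ‖p.1 - q.1‖) (x : E) :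
    ∃ y : F, ∀ p ∈ s, ‖y - p.2‖ ≤ ‖x - p.1‖ := by
  classical
  rcases s.eq_empty_or_nonempty with rfl | hne
  · exact ⟨0, by simp⟩
  by_cases hx : ∃ p ∈ s, p.1 = x
  · obtain ⟨p, hp, hpx⟩ := hx
    refine ⟨p.2, fun q hq => ?_⟩
    have := hs p hp q hq
    rwa [hpx] at this
  push_neg at hx
  have hrpos : ∀ p ∈ s, 0 < ‖x - p.1‖ := by
    intro p hp
    rw [norm_pos_iff]
    exact sub_ne_zero.mpr fun hxx => hx p hp hxx.symm
  set φ : F → ℝ := fun y => s.sup' hne fun p => ‖y - p.2‖ / ‖x - p.1‖ with hφ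
  have hφc : Continuous φ :=
    continuous_finset_sup'_apply hne _ fun p =>
      ((continuous_id.sub continuous_const).norm).div_const _
  obtain ⟨p0, hp0⟩ := hne
  have h0 : (0:ℝ) ≤ φ p0.2 := by
    have h1 : (0:ℝ) ≤ ‖p0.2 - p0.2‖ / ‖x - p0.1‖ := by positivity
    exact le_trans h1 (Finset.le_sup' (fun p : E × F => ‖p0.2 - p.2‖ / ‖x - p.1‖) hp0)
  set R : ℝ := ‖x - p0.1‖ * (φ p0.2 + 1) with hR
  have hRpos : 0 < R := by
    have := hrpos p0 hp0; nlinarith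
  obtain ⟨y, hyB, hymin⟩ := (isCompact_closedBall p0.2 R).exists_isMinOn
    (Metric.nonempty_closedBall.mpr hRpos.le) hφc.continuousOn
  have hglobal : ∀ z, φ y ≤ φ z := by
    intro z
    by_cases hz : z ∈ Metric.closedBall p0.2 R
    · exact isMinOn_iff.mp hymin z hz
    · have hz' : R < ‖z - p0.2‖ := by
        rw [Metric.mem_closedBall, dist_eq_norm, not_le] at hz; exact hz
      have hr0 := hrpos p0 hp0
      have h1 : ‖z - p0.2‖ / ‖x - p0.1‖ ≤ φ z := Finset.le_sup' (fun p : E × F => ‖z - p.2‖ / ‖x - p.1‖) hp0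
      have h2 : φ p0.2 + 1 < ‖z - p0.2‖ / ‖x - p0.1‖ := by
        rw [lt_div_iff₀ hr0]; nlinarith
      have h3 : φ y ≤ φ p0.2 :=
        isMinOn_iff.mp hymin p0.2 (Metric.mem_closedBall_self hRpos.le)
      linarith
  set lam : ℝ := φ y with hlamdef
  by_cases hlam : lam ≤ 1
  · refine ⟨y, fun p hp => ?_⟩
    have h1 : ‖y - p.2‖ / ‖x - p.1‖ ≤ lam := Finset.le_sup' (fun p : E × F => ‖y - p.2‖ / ‖x - p.1‖) hp
    have h2 := hrpos p hp
    rw [div_le_iff₀ h2] at h1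
    nlinarith
  exfalso
  push_neg at hlam
  -- the touching set
  set T : Finset (E × F) := s.filter (fun p => ‖y - p.2‖ = lam * ‖x - p.1‖) with hT
  have hTs : T ⊆ s := Finset.filter_subset _ _
  have hTne : T.Nonempty := by
    obtain ⟨p, hp, hpe⟩ := Finset.exists_mem_eq_sup' ⟨p0, hp0⟩
      (fun p : E × F => ‖y - p.2‖ / ‖x - p.1‖)
    refine ⟨p, Finset.mem_filter.mpr ⟨hp, ?_⟩⟩
    have h2 := hrpos p hp
    have : lam = ‖y - p.2‖ / ‖x - p.1‖ := hpe
    field_simp at this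
    linarith
  set J : Finset F := T.image Prod.snd with hJ
  have hJne : J.Nonempty := hTne.image _
  -- the minimizer lies in the convex hull of touching points
  have hyhull : y ∈ convexHull ℝ (J : Set F) := by
    by_contra hyc
    obtain ⟨ℓ, u, hu1, hu2⟩ := geometric_hahn_banach_point_closed
      (convex_convexHull ℝ _) ((J.finite_toSet).isClosed_convexHull ℝ) hyc
    set v : F := (InnerProductSpace.toDual ℝ F).symm ℓ with hv
    have hvz : ∀ z : F, (inner ℝ v z : ℝ) = ℓ z := fun z => InnerProductSpace.toDual_symm_apply
    have hδpos : 0 < u - ℓ y := sub_pos.mpr hu1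
    set δ : ℝ := u - ℓ y with hδ
    have hvT : ∀ p ∈ T, δ ≤ (inner ℝ v (p.2 - y) : ℝ) := by
      intro p hp
      have hmem : p.2 ∈ convexHull ℝ (J : Set F) :=
        subset_convexHull _ _ (by exact_mod_cast Finset.mem_image_of_mem Prod.snd hp)
      have := (hu2 _ hmem).le
      rw [inner_sub_right, hvz, hvz]
      linarith
    have hvne : v ≠ 0 := by
      obtain ⟨p, hp⟩ := hTne
      intro h0v
      have h1 := hvT p hp
      rw [h0v, inner_zero_left] at h1
      linarith
    have hvpos : 0 < ‖v‖ := norm_pos_iff.mpr hvne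
    set g : E × F → ℝ := fun p => if ‖y - p.2‖ = lam * ‖x - p.1‖ then δ / ‖v‖ ^ 2
        else (lam * ‖x - p.1‖ - ‖y - p.2‖) / (‖v‖ + 1) with hg
    set t : ℝ := s.inf' ⟨p0, hp0⟩ g with ht
    have htpos : 0 < t := by
      rw [ht]; refine (Finset.lt_inf'_iff _).mpr ?_
      intro p hp
      rw [hg]
      dsimp only
      split
      · positivity
      · next hne' =>
        have h1 : ‖y - p.2‖ / ‖x - p.1‖ ≤ lam := Finset.le_sup' (fun p : E × F => ‖y - p.2‖ / ‖x - p.1‖) hp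
        rw [div_le_iff₀ (hrpos p hp)] at h1
        have h2 : ‖y - p.2‖ < lam * ‖x - p.1‖ := lt_of_le_of_ne h1 hne'
        have h3 : (0:ℝ) < ‖v‖ + 1 := by positivity
        exact div_pos (by linarith) h3
    have hstep : ∀ p ∈ s, ‖y + t • v - p.2‖ < lam * ‖x - p.1‖ := by
      intro p hp
      have htle : t ≤ g p := Finset.inf'_le g hp
      by_cases hpT : ‖y - p.2‖ = lam * ‖x - p.1‖
      · have h1 : t ≤ δ / ‖v‖ ^ 2 := by
          rw [hg] at htle; simpa [if_pos hpT] using htle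
        have h1' : t * ‖v‖ ^ 2 ≤ δ := by
          rw [le_div_iff₀ (by positivity)] at h1; linarith
        have hip : (inner ℝ v (p.2 - y) : ℝ) ≥ δ := hvT p (Finset.mem_filter.mpr ⟨hp, hpT⟩)
        have hexp : ‖y + t • v - p.2‖ ^ 2
            = ‖y - p.2‖ ^ 2 + 2 * (t * (inner ℝ (y - p.2) v : ℝ)) + t ^ 2 * ‖v‖ ^ 2 := by
          have : y + t • v - p.2 = (y - p.2) + t • v := by abel
          rw [this, norm_add_sq_real, real_inner_smul_right, norm_smul,
            Real.norm_eq_abs, abs_of_pos htpos, mul_pow]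
        have hip2 : (inner ℝ (y - p.2) v : ℝ) ≤ -δ := by
          have : (inner ℝ v (y - p.2) : ℝ) = - (inner ℝ v (p.2 - y) : ℝ) := by
            rw [← inner_neg_right]; congr 1; abel
          rw [real_inner_comm, this]
          linarith
        have hsq : ‖y + t • v - p.2‖ ^ 2 < (lam * ‖x - p.1‖) ^ 2 := by
          rw [hexp, ← hpT]
          nlinarith
        have hb : (0:ℝ) ≤ lam * ‖x - p.1‖ := by positivity
        exact lt_of_pow_lt_pow_left₀ 2 hb hsq
      · have h1 : t ≤ (lam * ‖x - p.1‖ - ‖y - p.2‖) / (‖v‖ + 1) := by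
          rw [hg] at htle; simpa [if_neg hpT] using htle
        have h1' : t * (‖v‖ + 1) ≤ lam * ‖x - p.1‖ - ‖y - p.2‖ := by
          rw [le_div_iff₀ (by positivity)] at h1; linarith
        have h2 : ‖y + t • v - p.2‖ ≤ ‖y - p.2‖ + t * ‖v‖ := by
          have : y + t • v - p.2 = (y - p.2) + t • v := by abel
          rw [this]
          calc ‖(y - p.2) + t • v‖ ≤ ‖y - p.2‖ + ‖t • v‖ := norm_add_le _ _
            _ = ‖y - p.2‖ + t * ‖v‖ := by rw [norm_smul, Real.norm_eq_abs, abs_of_pos htpos]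
        nlinarith
    have hclt : φ (y + t • v) < lam := by
      rw [hφ]; refine (Finset.sup'_lt_iff _).mpr ?_
      intro p hp
      rw [div_lt_iff₀ (hrpos p hp)]
      exact hstep p hp
    exact absurd (hglobal (y + t • v)) (not_le.mpr hclt)
  -- extract convex weights
  rw [Finset.convexHull_eq] at hyhull
  obtain ⟨w, hw0, hw1, hwc⟩ := hyhull
  rw [Finset.centerMass_eq_of_sum_1 _ _ hw1] at hwc
  simp only [id] at hwc
  -- choose preimages
  have hex : ∀ z ∈ J, ∃ p, p ∈ T ∧ p.2 = z := fun z hz => by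
    obtain ⟨p, hp, hpz⟩ := Finset.mem_image.mp hz; exact ⟨p, hp, hpz⟩
  set a : F → E := fun z => if h : ∃ p, p ∈ T ∧ p.2 = z then h.choose.1 else 0 with ha
  have haT : ∀ z ∈ J, (a z, z) ∈ T := by
    intro z hz
    have h := hex z hz
    have hspec := h.choose_spec
    rw [ha]
    dsimp only
    rw [dif_pos h]
    have heq : (h.choose.1, z) = h.choose := Prod.ext_iff.mpr ⟨rfl, hspec.2.symm⟩
    rw [heq]
    exact hspec.1
  have haS : ∀ z ∈ J, (a z, z) ∈ s := fun z hz => hTs (haT z hz)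
  have haE : ∀ z ∈ J, ‖y - z‖ = lam * ‖x - a z‖ := by
    intro z hz
    have := Finset.mem_filter.mp (haT z hz)
    exact this.2
  -- the quadratic computation
  have hu0 : ∑ z ∈ J, w z • (y - z) = 0 := by
    simp only [smul_sub]
    rw [Finset.sum_sub_distrib, ← Finset.sum_smul, hw1, one_smul, hwc]
    simp
  have key1 := sum_sum_norm_sub_sq J w (fun z => y - z) hw1
  rw [hu0] at key1
  simp only [norm_zero] at key1
  have key2 := sum_sum_norm_sub_sq J w (fun z => x - a z) hw1
  have hcomp : ∑ z ∈ J, ∑ z' ∈ J, (w z * w z') * ‖(y - z) - (y - z')‖ ^ 2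
      ≤ ∑ z ∈ J, ∑ z' ∈ J, (w z * w z') * ‖(x - a z) - (x - a z')‖ ^ 2 := by
    refine Finset.sum_le_sum fun z hz => Finset.sum_le_sum fun z' hz' => ?_
    have h1 : (y - z) - (y - z') = z' - z := by abel
    have h2 : (x - a z) - (x - a z') = a z' - a z := by abel
    have h3 : ‖z' - z‖ ≤ ‖a z' - a z‖ := hs _ (haS z' hz') _ (haS z hz)
    rw [h1, h2]
    have h4 : ‖z' - z‖ ^ 2 ≤ ‖a z' - a z‖ ^ 2 := by
      have := norm_nonneg (z' - z); nlinarith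
    exact mul_le_mul_of_nonneg_left h4 (mul_nonneg (hw0 z hz) (hw0 z' hz'))
  have hL : ∑ z ∈ J, w z * ‖y - z‖ ^ 2 = lam ^ 2 * ∑ z ∈ J, w z * ‖x - a z‖ ^ 2 := by
    rw [Finset.mul_sum]
    refine Finset.sum_congr rfl fun z hz => ?_
    rw [haE z hz]; ring
  have hSpos : 0 < ∑ z ∈ J, w z * ‖x - a z‖ ^ 2 := by
    have h01 : (0:ℝ) < 1 := one_pos
    obtain ⟨z0, hz0, hwz0⟩ := Finset.exists_lt_of_sum_lt
      (show ∑ z ∈ J, (0:ℝ) < ∑ z ∈ J, w z by rw [hw1]; simpa using h01)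
    refine Finset.sum_pos' (fun z hz => mul_nonneg (hw0 z hz) (sq_nonneg _)) ⟨z0, hz0, ?_⟩
    have := hrpos _ (haS z0 hz0)
    have h5 : (0:ℝ) < ‖x - a z0‖ ^ 2 := by positivity
    exact mul_pos hwz0 h5
  have hNn : (0:ℝ) ≤ ‖∑ z ∈ J, w z • (x - a z)‖ ^ 2 := sq_nonneg _
  have h6 : (1:ℝ) < lam ^ 2 := by
    nlinarith [mul_pos (sub_pos.mpr hlam) (show (0:ℝ) < lam + 1 by linarith)]
  have h7 := mul_lt_mul_of_pos_right h6 hSpos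
  linarith [key1, hcomp, key2, hL, hNn, h7]

lemma kirszbraun_onePoint [FiniteDimensional ℝ F]
    (s : Set (E × F)) (hs : ∀ p ∈ s, ∀ q ∈ s, ‖p.2 - q.2‖ ≤ ‖p.1 - q.1‖) (x : E) :
    ∃ y : F, ∀ p ∈ s, ‖y - p.2‖ ≤ ‖x - p.1‖ := by
  classical
  rcases s.eq_empty_or_nonempty with rfl | ⟨p0, hp0⟩
  · exact ⟨0, by simp⟩
  have key := (isCompact_closedBall p0.2 ‖x - p0.1‖).inter_iInter_nonempty
    (fun p : s => Metric.closedBall (p : E × F).2 ‖x - (p : E × F).1‖)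
    (fun p => Metric.isClosed_closedBall)
    (by
      intro u
      -- apply the finite lemma to the finset of pairs
      set t : Finset (E × F) := insert p0 (u.image (Subtype.val)) with htdef
      have hts : ∀ p ∈ t, p ∈ s := by
        intro p hp
        rcases Finset.mem_insert.mp hp with h | h
        · exact h ▸ hp0
        · obtain ⟨q, _, rfl⟩ := Finset.mem_image.mp h
          exact q.2
      obtain ⟨y, hy⟩ := kirszbraun_onePoint_finset t
        (fun p hp q hq => hs p (hts p hp) q (hts q hq)) x
      refine ⟨y, ?_, ?_⟩
      · rw [Metric.mem_closedBall, dist_eq_norm]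
        exact hy p0 (Finset.mem_insert_self _ _)
      · rw [Set.mem_iInter₂]
        intro i hi
        rw [Metric.mem_closedBall, dist_eq_norm]
        exact hy i (Finset.mem_insert_of_mem (Finset.mem_image_of_mem _ hi)))
  obtain ⟨y, _, hy2⟩ := key
  rw [Set.mem_iInter] at hy2
  refine ⟨y, fun p hp => ?_⟩
  have := hy2 ⟨p, hp⟩
  rwa [Metric.mem_closedBall, dist_eq_norm] at this

/-- Kirszbraun's theorem, graph form: a 1-Lipschitz correspondence contained in `E × F`
extends to a globally defined 1-Lipschitz function. -/
theorem kirszbraun_graph [FiniteDimensional ℝ F]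
    (s₀ : Set (E × F)) (hs₀ : ∀ p ∈ s₀, ∀ q ∈ s₀, ‖p.2 - q.2‖ ≤ ‖p.1 - q.1‖) :
    ∃ g : E → F, (∀ p ∈ s₀, g p.1 = p.2) ∧ ∀ x y, ‖g x - g y‖ ≤ ‖x - y‖ := by
  classical
  set S : Set (Set (E × F)) :=
    {t | s₀ ⊆ t ∧ ∀ p ∈ t, ∀ q ∈ t, ‖p.2 - q.2‖ ≤ ‖p.1 - q.1‖} with hS
  obtain ⟨M, hM0, hMmax⟩ := zorn_subset_nonempty S
    (by
      intro c hcS hchain hcne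
      refine ⟨⋃₀ c, ⟨?_, ?_⟩, fun t ht => Set.subset_sUnion_of_mem ht⟩
      · obtain ⟨t, htc⟩ := hcne
        exact (hcS htc).1.trans (Set.subset_sUnion_of_mem htc)
      · rintro p ⟨tp, htp, hptp⟩ q ⟨tq, htq, hqtq⟩
        rcases hchain.total htp htq with h | h
        · exact (hcS htq).2 p (h hptp) q hqtq
        · exact (hcS htp).2 p hptp q (h hqtq))
    s₀ ⟨Set.Subset.rfl, hs₀⟩
  have hMS : M ∈ S := hMmax.prop
  have htotal : ∀ x : E, ∃ y : F, (x, y) ∈ M := by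
    intro x
    by_contra hne
    push_neg at hne
    obtain ⟨y, hy⟩ := kirszbraun_onePoint M hMS.2 x
    have hMS' : insert (x, y) M ∈ S := by
      constructor
      · exact hMS.1.trans (Set.subset_insert _ _)
      · rintro p (rfl | hp) q (rfl | hq)
        · simp
        · exact hy q hq
        · rw [norm_sub_rev, norm_sub_rev (p.1)]
          exact hy p hp
        · exact hMS.2 p hp q hq
    have := hMmax.eq_of_subset hMS' (Set.subset_insert _ _)
    exact hne y (this ▸ Set.mem_insert _ _)
  choose g hg using htotal
  refine ⟨g, fun p hp => ?_, fun x y => ?_⟩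
  · have h1 := hMS.2 (p.1, g p.1) (hg p.1) p (hMS.1 hp)
    simp only [sub_self, norm_zero] at h1
    have : ‖g p.1 - p.2‖ = 0 := le_antisymm h1 (norm_nonneg _)
    rwa [norm_sub_eq_zero_iff] at this
  · exact hMS.2 (x, g x) (hg x) (y, g y) (hg y)

end Kirszbraun

/-- Gluing a vector in `ℝ^m` and one in `ℝ^n` into one in `ℝ^(n+m)`, the `ℝ^m` part first. -/
noncomputable def glueVec {n m : ℕ} (a : EuclideanSpace ℝ (Fin m)) (b : EuclideanSpace ℝ (Fin n)) :
    EuclideanSpace ℝ (Fin (n + m)) :=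
  WithLp.toLp 2 (fun j : Fin (n + m) => if h : (j : ℕ) < m then a ⟨j, h⟩ else b ⟨(j : ℕ) - m, by have := j.isLt; omega⟩)

lemma glueVec_sub {n m : ℕ} (a a' : EuclideanSpace ℝ (Fin m)) (b b' : EuclideanSpace ℝ (Fin n)) :
    glueVec a b - glueVec a' b' = glueVec (a - a') (b - b') := by
  ext j
  simp only [PiLp.sub_apply, glueVec, PiLp.toLp_apply]
  split <;> simp [PiLp.sub_apply]

lemma glueVec_norm_sq {n m : ℕ} (a : EuclideanSpace ℝ (Fin m)) (b : EuclideanSpace ℝ (Fin n)) :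
    ‖glueVec a b‖ ^ 2 = ‖a‖ ^ 2 + ‖b‖ ^ 2 := by
  have hsum : ∀ (k : ℕ) (v : EuclideanSpace ℝ (Fin k)), ‖v‖ ^ 2 = ∑ i : Fin k, (v i) ^ 2 := by
    intro k v
    rw [EuclideanSpace.norm_eq, Real.sq_sqrt (by positivity)]
    exact Finset.sum_congr rfl fun i _ => by rw [Real.norm_eq_abs, sq_abs]
  rw [hsum, hsum, hsum]
  set G : ℕ → ℝ := fun j => if h : j < m then (a ⟨j, h⟩) ^ 2
      else if h2 : j - m < n then (b ⟨j - m, h2⟩) ^ 2 else 0 with hG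
  have h1 : ∑ j : Fin (n + m), (glueVec a b j) ^ 2 = ∑ j ∈ Finset.range (n + m), G j := by
    rw [← Fin.sum_univ_eq_sum_range]
    refine Finset.sum_congr rfl fun j _ => ?_
    rw [hG]
    simp only [glueVec, PiLp.toLp_apply]
    split
    · next h => rfl
    · next h =>
      have h2 : (j : ℕ) - m < n := by have := j.isLt; omega
      rw [dif_pos h2]
  have h2 : ∑ j ∈ Finset.range m, G j = ∑ i : Fin m, (a i) ^ 2 := by
    rw [← Fin.sum_univ_eq_sum_range]
    refine Finset.sum_congr rfl fun j _ => ?_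
    rw [hG]
    simp only [dif_pos j.isLt]
  have h3 : ∑ j ∈ Finset.Ico m (n + m), G j = ∑ i : Fin n, (b i) ^ 2 := by
    rw [Finset.sum_Ico_eq_sum_range]
    have hnm : n + m - m = n := by omega
    rw [hnm, ← Fin.sum_univ_eq_sum_range (fun k => G (m + k)) n]
    refine Finset.sum_congr rfl fun j _ => ?_
    rw [hG]
    have hj1 : ¬ (m + (j : ℕ) < m) := by omega
    have hj2 : m + (j : ℕ) - m < n := by have := j.isLt; omega
    simp only [dif_neg hj1, dif_pos hj2]
    have hidx : (⟨m + (j : ℕ) - m, hj2⟩ : Fin n) = j := by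
      apply Fin.ext
      simp only
      omega
    rw [hidx]
  rw [h1, Finset.range_eq_Ico, ← Finset.sum_Ico_consecutive G (Nat.zero_le m) (Nat.le_add_left m n),
    ← Finset.range_eq_Ico, h2, h3]

lemma le_of_sq_le_sq' {a b : ℝ} (hb : 0 ≤ b) (h : a ^ 2 ≤ b ^ 2) (ha : 0 ≤ a) : a ≤ b := by
  nlinarith

/-- `f` restricted to `A` has distortion at most `D`: there is a scale `lam > 0` with
`lam * ‖x - y‖ ≤ ‖f x - f y‖ ≤ lam * D * ‖x - y‖` for all `x, y ∈ A`. -/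
def HasDistortionAtMost {n m : ℕ} (A : Set (EuclideanSpace ℝ (Fin n)))
    (f : EuclideanSpace ℝ (Fin n) → EuclideanSpace ℝ (Fin m)) (D : ℝ) : Prop :=
  ∃ lam > (0 : ℝ), ∀ x ∈ A, ∀ y ∈ A,
    lam * ‖x - y‖ ≤ ‖f x - f y‖ ∧ ‖f x - f y‖ ≤ lam * D * ‖x - y‖

set_option maxHeartbeats 1000000 in
/-- **Outer bi-Lipschitz extension theorem.** Every map `f : X → ℝᵐ`, `X ⊆ ℝⁿ`, of distortion
at most `D` admits an outer extension `f' : ℝⁿ → ℝⁿ⁺ᵐ` (i.e. `f' x = (f x, 0, …, 0)` for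
`x ∈ X`) of distortion at most `3 * D`. -/
theorem outer_biLipschitz_extension {n m : ℕ} (X : Set (EuclideanSpace ℝ (Fin n)))
    (f : EuclideanSpace ℝ (Fin n) → EuclideanSpace ℝ (Fin m)) (D : ℝ) (hD : 1 ≤ D)
    (hf : HasDistortionAtMost X f D) :
    ∃ f' : EuclideanSpace ℝ (Fin n) → EuclideanSpace ℝ (Fin (n + m)),
      (∀ x ∈ X, ∀ j : Fin (n + m),
        f' x j = if h : (j : ℕ) < m then f x ⟨j, h⟩ else 0) ∧
      HasDistortionAtMost Set.univ f' (3 * D) := by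
  classical
  obtain ⟨l, hl, hlip⟩ := hf
  have hD0 : (0:ℝ) < D := lt_of_lt_of_le one_pos hD
  have hlD : (0:ℝ) < l * D := mul_pos hl hD0
  -- Kirszbraun extension of f (with Lipschitz constant l * D, via scaling)
  obtain ⟨g₁, hg₁e, hg₁l⟩ := kirszbraun_graph
    ((fun x => ((l * D) • x, f x)) '' X)
    (by
      rintro p ⟨xp, hxp, rfl⟩ q ⟨xq, hxq, rfl⟩
      simp only
      rw [← smul_sub, norm_smul, Real.norm_eq_abs, abs_of_pos hlD]
      exact (hlip xp hxp xq hxq).2)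
  set ft : EuclideanSpace ℝ (Fin n) → EuclideanSpace ℝ (Fin m) :=
    fun x => g₁ ((l * D) • x) with hft
  have hftX : ∀ x ∈ X, ft x = f x := by
    intro x hx
    exact hg₁e ((l * D) • x, f x) ⟨x, hx, rfl⟩
  have hftLip : ∀ x y, ‖ft x - ft y‖ ≤ l * D * ‖x - y‖ := by
    intro x y
    calc ‖ft x - ft y‖ ≤ ‖(l * D) • x - (l * D) • y‖ := hg₁l _ _
      _ = l * D * ‖x - y‖ := by
        rw [← smul_sub, norm_smul, Real.norm_eq_abs, abs_of_pos hlD]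
  -- Kirszbraun extension of f⁻¹ (Lipschitz constant 1/l, via scaling)
  obtain ⟨g₂, hg₂e, hg₂l⟩ := kirszbraun_graph
    ((fun x => (f x, l • x)) '' X)
    (by
      rintro p ⟨xp, hxp, rfl⟩ q ⟨xq, hxq, rfl⟩
      simp only
      rw [← smul_sub, norm_smul, Real.norm_eq_abs, abs_of_pos hl]
      exact (hlip xp hxp xq hxq).1)
  set g : EuclideanSpace ℝ (Fin m) → EuclideanSpace ℝ (Fin n) :=
    fun u => l⁻¹ • g₂ u with hgdef
  have hgX : ∀ x ∈ X, g (f x) = x := by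
    intro x hx
    have := hg₂e (f x, l • x) ⟨x, hx, rfl⟩
    rw [hgdef]
    simp only
    rw [this, smul_smul, inv_mul_cancel₀ hl.ne', one_smul]
  have hgLip : ∀ u v, ‖g u - g v‖ ≤ l⁻¹ * ‖u - v‖ := by
    intro u v
    rw [hgdef]
    simp only
    rw [← smul_sub, norm_smul, Real.norm_eq_abs, abs_of_pos (inv_pos.mpr hl)]
    exact mul_le_mul_of_nonneg_left (hg₂l u v) (inv_pos.mpr hl).le
  -- the displacement part
  set h : EuclideanSpace ℝ (Fin n) → EuclideanSpace ℝ (Fin n) :=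
    fun x => x - g (ft x) with hhdef
  set c : ℝ := l / Real.sqrt 2 with hc
  have hs2 : (0:ℝ) < Real.sqrt 2 := Real.sqrt_pos.mpr (by norm_num)
  have hs2sq : (Real.sqrt 2) ^ 2 = 2 := Real.sq_sqrt (by norm_num)
  have hcpos : 0 < c := div_pos hl hs2
  set F' : EuclideanSpace ℝ (Fin n) → EuclideanSpace ℝ (Fin (n + m)) :=
    fun x => glueVec (ft x) (c • h x) with hF'
  have hhX : ∀ x ∈ X, h x = 0 := by
    intro x hx
    rw [hhdef]
    simp only
    rw [hftX x hx, hgX x hx, sub_self]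
  refine ⟨F', ?_, ?_⟩
  · intro x hx j
    rw [hF']
    simp only [glueVec, PiLp.toLp_apply]
    rw [hftX x hx, hhX x hx]
    split
    · rfl
    · simp
  -- distortion bound
  have hs3 : (0:ℝ) < Real.sqrt 3 := Real.sqrt_pos.mpr (by norm_num)
  have hs3sq : (Real.sqrt 3) ^ 2 = 3 := Real.sq_sqrt (by norm_num)
  refine ⟨l / Real.sqrt 3, div_pos hl hs3, ?_⟩
  intro x _ y _
  -- basic quantities
  set A : ℝ := ‖c • h x - c • h y‖ with hA
  set B : ℝ := ‖ft x - ft y‖ with hB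
  set P : ℝ := ‖F' x - F' y‖ with hP
  have hAnn : 0 ≤ A := norm_nonneg _
  have hBnn : 0 ≤ B := norm_nonneg _
  have hPnn : 0 ≤ P := norm_nonneg _
  have hPsq : P ^ 2 = B ^ 2 + A ^ 2 := by
    rw [hP, hF']
    simp only
    rw [glueVec_sub, glueVec_norm_sq]
  have hAval : A = c * ‖h x - h y‖ := by
    rw [hA, ← smul_sub, norm_smul, Real.norm_eq_abs, abs_of_pos hcpos]
  -- Lipschitz bound for h
  have hgft : ‖g (ft x) - g (ft y)‖ ≤ l⁻¹ * B := by
    rw [hB]; exact hgLip _ _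
  have hhub : ‖h x - h y‖ ≤ ‖x - y‖ + l⁻¹ * B := by
    rw [hhdef]
    simp only
    calc ‖x - g (ft x) - (y - g (ft y))‖
        = ‖(x - y) - (g (ft x) - g (ft y))‖ := by congr 1; abel
      _ ≤ ‖x - y‖ + ‖g (ft x) - g (ft y)‖ := norm_sub_le _ _
      _ ≤ ‖x - y‖ + l⁻¹ * B := by linarith
  -- lower bound for h
  have hhlb : ‖x - y‖ ≤ ‖h x - h y‖ + l⁻¹ * B := by
    have hid : x - y = (h x - h y) + (g (ft x) - g (ft y)) := by
      rw [hhdef]; simp only; abel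
    calc ‖x - y‖ = ‖(h x - h y) + (g (ft x) - g (ft y))‖ := by rw [← hid]
      _ ≤ ‖h x - h y‖ + ‖g (ft x) - g (ft y)‖ := norm_add_le _ _
      _ ≤ ‖h x - h y‖ + l⁻¹ * B := by linarith
  have hBub : B ≤ l * D * ‖x - y‖ := hftLip x y
  constructor
  · -- lower bound : (l / √3) * ‖x - y‖ ≤ P
    -- first: l * ‖x-y‖ ≤ √2 * A + B
    have key : l * ‖x - y‖ ≤ Real.sqrt 2 * A + B := by
      have h1 : l * ‖x - y‖ ≤ l * ‖h x - h y‖ + B := by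
        have := mul_le_mul_of_nonneg_left hhlb hl.le
        rw [mul_add] at this
        have hB' : l * (l⁻¹ * B) = B := by field_simp
        linarith [this, hB'.le]
      have h2 : l * ‖h x - h y‖ = Real.sqrt 2 * A := by
        have hc2 : Real.sqrt 2 * c = l := by
          rw [hc]; field_simp
        rw [hAval, ← hc2]; ring
      linarith
    -- Cauchy-Schwarz: √2 A + B ≤ √3 √(A²+B²) = √3 P
    have hCS : Real.sqrt 2 * A + B ≤ Real.sqrt 3 * P := by
      have hsq : (Real.sqrt 2 * A + B) ^ 2 ≤ (Real.sqrt 3 * P) ^ 2 := by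
        have expand : (Real.sqrt 3 * P) ^ 2 = 3 * (B ^ 2 + A ^ 2) := by
          rw [mul_pow, hs3sq, hPsq]
        rw [expand]
        nlinarith [sq_nonneg (A - Real.sqrt 2 * B), hs2sq]
      refine le_of_sq_le_sq' (by positivity) hsq (by positivity)
    have h3 : l * ‖x - y‖ ≤ Real.sqrt 3 * P := le_trans key hCS
    rw [div_mul_eq_mul_div, div_le_iff₀ hs3]
    linarith [h3, mul_comm P (Real.sqrt 3)]
  · -- upper bound : P ≤ (l / √3) * (3 * D) * ‖x - y‖
    have hAub : A ≤ c * ((1 + D) * ‖x - y‖) := by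
      rw [hAval]
      refine mul_le_mul_of_nonneg_left ?_ hcpos.le
      have : l⁻¹ * B ≤ D * ‖x - y‖ := by
        rw [← mul_le_mul_iff_right₀ hl]
        calc l * (l⁻¹ * B) = B := by field_simp
          _ ≤ l * D * ‖x - y‖ := hBub
          _ = l * (D * ‖x - y‖) := by ring
      linarith [hhub]
    have hPsqub : P ^ 2 ≤ 3 * (l * D * ‖x - y‖) ^ 2 := by
      have hA2 : A ^ 2 ≤ (c * ((1 + D) * ‖x - y‖)) ^ 2 := pow_le_pow_left₀ hAnn hAub 2
      have hB2 : B ^ 2 ≤ (l * D * ‖x - y‖) ^ 2 := pow_le_pow_left₀ hBnn hBub 2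
      have hc2 : c ^ 2 = l ^ 2 / 2 := by
        rw [hc, div_pow, hs2sq]
      rw [hPsq]
      have hDD : (1 + D) ^ 2 ≤ 4 * D ^ 2 := by nlinarith
      have hx2 : (0:ℝ) ≤ ‖x - y‖ ^ 2 := sq_nonneg _
      have hl2 : (0:ℝ) ≤ l ^ 2 := sq_nonneg _
      have hA2' : A ^ 2 ≤ l ^ 2 / 2 * ((1 + D) * ‖x - y‖) ^ 2 := by
        have : (c * ((1 + D) * ‖x - y‖)) ^ 2 = c ^ 2 * ((1 + D) * ‖x - y‖) ^ 2 := by ring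
        rw [this, hc2] at hA2
        exact hA2
      have hkey : l ^ 2 / 2 * ((1 + D) * ‖x - y‖) ^ 2 ≤ 2 * (l * D * ‖x - y‖) ^ 2 := by
        nlinarith [mul_nonneg hl2 hx2, mul_nonneg (mul_nonneg hl2 hx2) (sq_nonneg D), hDD]
      linarith
    have hfinal : P ≤ Real.sqrt 3 * (l * D * ‖x - y‖) := by
      refine le_of_sq_le_sq' (by positivity) ?_ hPnn
      rw [mul_pow, hs3sq]
      exact hPsqub
    have heq : l / Real.sqrt 3 * (3 * D) * ‖x - y‖ = Real.sqrt 3 * (l * D * ‖x - y‖) := by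
      rw [div_mul_eq_mul_div, div_mul_eq_mul_div, div_eq_iff hs3.ne']
      nlinarith [hs3sq]
    rw [heq]
    exact hfinal
end

section
/- Let ε ∈ (0,1), let X ⊂ ℝ^n be a finite set containing 0, and let f : X → ℝ^m satisfy f(0) = 0 and ‖v − w‖² ≤ ‖f(v) − f(w)‖² ≤ (1 + 3ε)‖v − w‖² for all v, w ∈ X. Let u ∈ ℝ^n with ‖u‖ ≤ 1. Then there exists a vector u' ∈ ℝ^m such that (1) ‖u'‖ ≤ 1, and (2) |⟨u', f(v)⟩ − ⟨u, v⟩| ≤ 3√ε · (‖v‖² + 1) for every v ∈ X. -/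
open scoped RealInnerProductSpace

section aux
variable {ι : Type*} [Fintype ι]

lemma inner_double_sum' {E : Type*} [NormedAddCommGroup E] [InnerProductSpace ℝ E]
    (ν : ι → ℝ) (x : ι → E) :
    ⟪∑ i, ν i • x i, ∑ j, ν j • x j⟫ = ∑ i, ∑ j, ν i * ν j * ⟪x i, x j⟫ := by
  rw [sum_inner]
  refine Finset.sum_congr rfl fun i _ => ?_
  rw [inner_sum]
  refine Finset.sum_congr rfl fun j _ => ?_
  rw [real_inner_smul_left, real_inner_smul_right]; ring

lemma negType {E : Type*} [NormedAddCommGroup E] [InnerProductSpace ℝ E]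
    (ν : ι → ℝ) (x : ι → E) (hν : ∑ i, ν i = 0) :
    ∑ i, ∑ j, ν i * ν j * ‖x i - x j‖ ^ 2 = -2 * ‖∑ i, ν i • x i‖ ^ 2 := by
  have h2 := inner_double_sum' ν x
  rw [real_inner_self_eq_norm_sq] at h2
  have expand : ∀ i j : ι, ν i * ν j * ‖x i - x j‖ ^ 2
      = (ν i * ‖x i‖ ^ 2) * ν j + ν i * (ν j * ‖x j‖ ^ 2) - 2 * (ν i * ν j * ⟪x i, x j⟫) := by
    intro i j
    rw [@norm_sub_sq_real]
    ring
  calc ∑ i, ∑ j, ν i * ν j * ‖x i - x j‖ ^ 2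
      = ∑ i, ∑ j, ((ν i * ‖x i‖ ^ 2) * ν j + ν i * (ν j * ‖x j‖ ^ 2)
          - 2 * (ν i * ν j * ⟪x i, x j⟫)) :=
        Finset.sum_congr rfl fun i _ => Finset.sum_congr rfl fun j _ => expand i j
    _ = (∑ i, ν i * ‖x i‖ ^ 2) * (∑ j, ν j) + (∑ i, ν i) * (∑ j, ν j * ‖x j‖ ^ 2)
          - 2 * ∑ i, ∑ j, ν i * ν j * ⟪x i, x j⟫ := by
        simp only [Finset.sum_add_distrib, Finset.sum_sub_distrib, ← Finset.mul_sum,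
          ← Finset.sum_mul]
    _ = -2 * ‖∑ i, ν i • x i‖ ^ 2 := by
        rw [hν, ← h2]; ring

lemma compare' {E F : Type*} [NormedAddCommGroup E] [InnerProductSpace ℝ E]
    [NormedAddCommGroup F] [InnerProductSpace ℝ F]
    (ν : ι → ℝ) (x : ι → E) (y : ι → F) (hν : ∑ i, ν i = 0) {ε : ℝ} (hε : 0 ≤ ε)
    (hd : ∀ i j, ‖x i - x j‖ ^ 2 ≤ ‖y i - y j‖ ^ 2 ∧
      ‖y i - y j‖ ^ 2 ≤ (1 + 3 * ε) * ‖x i - x j‖ ^ 2) :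
    ‖∑ i, ν i • x i‖ ^ 2 ≤ ‖∑ i, ν i • y i‖ ^ 2
      + 6 * ε * (∑ i, |ν i|) * (∑ i, |ν i| * ‖x i‖ ^ 2) := by
  have hx := negType ν x hν
  have hy := negType ν y hν
  have hterm : ∀ i j : ι, ν i * ν j * ‖y i - y j‖ ^ 2 - ν i * ν j * ‖x i - x j‖ ^ 2
      ≤ |ν i| * |ν j| * (3 * ε * (2 * ‖x i‖ ^ 2 + 2 * ‖x j‖ ^ 2)) := by
    intro i j
    obtain ⟨h1, h2⟩ := hd i j
    have hD0 : (0:ℝ) ≤ ‖y i - y j‖ ^ 2 - ‖x i - x j‖ ^ 2 := by linarith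
    have hD : ν i * ν j * (‖y i - y j‖ ^ 2 - ‖x i - x j‖ ^ 2)
        ≤ |ν i| * |ν j| * (‖y i - y j‖ ^ 2 - ‖x i - x j‖ ^ 2) := by
      have := mul_le_mul_of_nonneg_right (le_abs_self (ν i * ν j)) hD0
      rwa [abs_mul] at this
    have h4 : ‖x i - x j‖ ^ 2 ≤ 2 * ‖x i‖ ^ 2 + 2 * ‖x j‖ ^ 2 := by
      have h := norm_sub_le (x i) (x j)
      have h' := mul_self_le_mul_self (norm_nonneg (x i - x j)) h
      nlinarith [sq_nonneg (‖x i‖ - ‖x j‖)]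
    have h5 : ‖y i - y j‖ ^ 2 - ‖x i - x j‖ ^ 2 ≤ 3 * ε * (2 * ‖x i‖ ^ 2 + 2 * ‖x j‖ ^ 2) := by
      nlinarith
    have h6 : |ν i| * |ν j| * (‖y i - y j‖ ^ 2 - ‖x i - x j‖ ^ 2)
        ≤ |ν i| * |ν j| * (3 * ε * (2 * ‖x i‖ ^ 2 + 2 * ‖x j‖ ^ 2)) := by
      apply mul_le_mul_of_nonneg_left h5 (by positivity)
    nlinarith [hD, h6]
  have hsum : ∑ i, ∑ j, (ν i * ν j * ‖y i - y j‖ ^ 2 - ν i * ν j * ‖x i - x j‖ ^ 2)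
      ≤ ∑ i, ∑ j, |ν i| * |ν j| * (3 * ε * (2 * ‖x i‖ ^ 2 + 2 * ‖x j‖ ^ 2)) :=
    Finset.sum_le_sum fun i _ => Finset.sum_le_sum fun j _ => hterm i j
  have hsplit : ∑ i, ∑ j, (ν i * ν j * ‖y i - y j‖ ^ 2 - ν i * ν j * ‖x i - x j‖ ^ 2)
      = (∑ i, ∑ j, ν i * ν j * ‖y i - y j‖ ^ 2) - ∑ i, ∑ j, ν i * ν j * ‖x i - x j‖ ^ 2 := by
    simp only [Finset.sum_sub_distrib]
  have hval : ∑ i, ∑ j, |ν i| * |ν j| * (3 * ε * (2 * ‖x i‖ ^ 2 + 2 * ‖x j‖ ^ 2))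
      = 12 * ε * (∑ i, |ν i|) * (∑ i, |ν i| * ‖x i‖ ^ 2) := by
    have e : ∀ i j : ι, |ν i| * |ν j| * (3 * ε * (2 * ‖x i‖ ^ 2 + 2 * ‖x j‖ ^ 2))
        = (6 * ε) * ((|ν i| * ‖x i‖ ^ 2) * |ν j|) + (6 * ε) * (|ν i| * (|ν j| * ‖x j‖ ^ 2)) :=
      fun i j => by ring
    calc ∑ i, ∑ j, |ν i| * |ν j| * (3 * ε * (2 * ‖x i‖ ^ 2 + 2 * ‖x j‖ ^ 2))
        = ∑ i, ∑ j, ((6 * ε) * ((|ν i| * ‖x i‖ ^ 2) * |ν j|)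
            + (6 * ε) * (|ν i| * (|ν j| * ‖x j‖ ^ 2))) :=
          Finset.sum_congr rfl fun i _ => Finset.sum_congr rfl fun j _ => e i j
      _ = 12 * ε * (∑ i, |ν i|) * (∑ i, |ν i| * ‖x i‖ ^ 2) := by
          simp only [Finset.sum_add_distrib, ← Finset.mul_sum, ← Finset.sum_mul]
          ring
  rw [hsplit, hx, hy] at hsum
  rw [hval] at hsum
  linarith

end aux

set_option maxHeartbeats 1000000 in
/-- **Key lemma for one-point extensions.** Let `ε ∈ (0,1)`, `X ⊂ ℝⁿ` finite with `0 ∈ X`, and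
`f : X → ℝᵐ` with `f 0 = 0` and `‖v - w‖² ≤ ‖f v - f w‖² ≤ (1 + 3ε)‖v - w‖²` on `X`. Let
`u ∈ ℝⁿ`, `‖u‖ ≤ 1`. Then there is `u' ∈ ℝᵐ` with `‖u'‖ ≤ 1` and
`|⟪u', f v⟫ - ⟪u, v⟫| ≤ 3√ε (‖v‖² + 1)` for all `v ∈ X`. -/
theorem exists_good_vector {n m : ℕ} (ε : ℝ) (hε : 0 < ε) (hε1 : ε < 1)
    (X : Set (EuclideanSpace ℝ (Fin n))) (hXfin : X.Finite) (h0X : (0 : EuclideanSpace ℝ (Fin n)) ∈ X)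
    (f : EuclideanSpace ℝ (Fin n) → EuclideanSpace ℝ (Fin m)) (hf0 : f 0 = 0)
    (hf : ∀ v ∈ X, ∀ w ∈ X,
      ‖v - w‖ ^ 2 ≤ ‖f v - f w‖ ^ 2 ∧ ‖f v - f w‖ ^ 2 ≤ (1 + 3 * ε) * ‖v - w‖ ^ 2)
    (u : EuclideanSpace ℝ (Fin n)) (hu : ‖u‖ ≤ 1) :
    ∃ u' : EuclideanSpace ℝ (Fin m), ‖u'‖ ≤ 1 ∧
      ∀ v ∈ X, |⟪u', f v⟫ - ⟪u, v⟫| ≤ 3 * Real.sqrt ε * (‖v‖ ^ 2 + 1) := by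
  classical
  have hsqε : 0 < Real.sqrt ε := Real.sqrt_pos.2 hε
  set s : Finset (EuclideanSpace ℝ (Fin n)) := hXfin.toFinset with hs
  have h0s : (0 : EuclideanSpace ℝ (Fin n)) ∈ s := hXfin.mem_toFinset.2 h0X
  set ι := {v // v ∈ s} with hι
  let φ : EuclideanSpace ℝ (Fin m) → (ι → ℝ) := fun x v => ⟪x, f v.1⟫
  let b : ι → ℝ := fun v => ⟪u, v.1⟫
  let c : ι → ℝ := fun v => 3 * Real.sqrt ε * (‖v.1‖ ^ 2 + 1)
  have hcpos : ∀ v : ι, 0 < c v := fun v => by positivity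
  let S1 : Set (ι → ℝ) := φ '' Metric.closedBall 0 1
  let S2 : Set (ι → ℝ) := {y | ∀ v : ι, |y v - b v| ≤ c v}
  have hmain : (S1 ∩ S2).Nonempty := by
    by_contra hcon
    rw [Set.not_nonempty_iff_eq_empty] at hcon
    have hdisj : Disjoint S1 S2 := Set.disjoint_iff_inter_eq_empty.mpr hcon
    have hS1conv : Convex ℝ S1 := by
      rintro y1 ⟨x1, hx1, rfl⟩ y2 ⟨x2, hx2, rfl⟩ a2 b2 ha hb hab
      rw [Metric.mem_closedBall, dist_zero_right] at hx1 hx2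
      refine ⟨a2 • x1 + b2 • x2, ?_, ?_⟩
      · rw [Metric.mem_closedBall, dist_zero_right]
        calc ‖a2 • x1 + b2 • x2‖ ≤ ‖a2 • x1‖ + ‖b2 • x2‖ := norm_add_le _ _
          _ = a2 * ‖x1‖ + b2 * ‖x2‖ := by
              rw [norm_smul, norm_smul, Real.norm_of_nonneg ha, Real.norm_of_nonneg hb]
          _ ≤ a2 * 1 + b2 * 1 :=
              add_le_add (mul_le_mul_of_nonneg_left hx1 ha) (mul_le_mul_of_nonneg_left hx2 hb)
          _ = 1 := by rw [mul_one, mul_one, hab]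
      · funext v
        simp only [φ, inner_add_left, real_inner_smul_left, Pi.add_apply, Pi.smul_apply,
          smul_eq_mul]
    have hS1comp : IsCompact S1 := by
      apply (isCompact_closedBall (0 : EuclideanSpace ℝ (Fin m)) 1).image
      exact continuous_pi fun v => Continuous.inner continuous_id continuous_const
    have hS2conv : Convex ℝ S2 := by
      intro y1 h1 y2 h2 a2 b2 ha hb hab
      intro v
      have e1 := h1 v
      have e2 := h2 v
      simp only [Pi.add_apply, Pi.smul_apply, smul_eq_mul]
      have : a2 * y1 v + b2 * y2 v - b v = a2 * (y1 v - b v) + b2 * (y2 v - b v) := by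
        have : b v = a2 * b v + b2 * b v := by rw [← add_mul, hab, one_mul]
        linarith [this]
      rw [this]
      calc |a2 * (y1 v - b v) + b2 * (y2 v - b v)|
          ≤ |a2 * (y1 v - b v)| + |b2 * (y2 v - b v)| := abs_add_le _ _
        _ = a2 * |y1 v - b v| + b2 * |y2 v - b v| := by
            rw [abs_mul, abs_mul, abs_of_nonneg ha, abs_of_nonneg hb]
        _ ≤ a2 * c v + b2 * c v :=
            add_le_add (mul_le_mul_of_nonneg_left e1 ha) (mul_le_mul_of_nonneg_left e2 hb)
        _ = c v := by rw [← add_mul, hab, one_mul]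
    have hS2closed : IsClosed S2 := by
      have : S2 = ⋂ v : ι, {y : ι → ℝ | |y v - b v| ≤ c v} := by
        ext y; simp [S2, Set.mem_iInter]
      rw [this]
      exact isClosed_iInter fun v =>
        isClosed_le (((continuous_apply v).sub continuous_const).abs) continuous_const
    obtain ⟨g, u₀, v₀, hg1, huv, hg2⟩ :=
      geometric_hahn_banach_compact_closed hS1conv hS1comp hS2conv hS2closed hdisj
    set μ : ι → ℝ := fun v => g (Pi.single v 1) with hμ
    have hgdec : ∀ y : ι → ℝ, g y = ∑ v : ι, y v * μ v := by
      intro y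
      have hy : y = ∑ v : ι, y v • (Pi.single v 1 : ι → ℝ) := by
        funext w
        simp [Finset.sum_apply, Pi.single_apply]
        rw [Finset.sum_eq_single w (fun x _ hx => if_neg (Ne.symm hx)) (by simp), if_pos rfl]
      conv_lhs => rw [hy]
      rw [map_sum]
      simp only [map_smul, smul_eq_mul, hμ]
    set w : EuclideanSpace ℝ (Fin m) := ∑ v : ι, μ v • f v.1 with hw
    set z : EuclideanSpace ℝ (Fin n) := ∑ v : ι, μ v • (v.1 : EuclideanSpace ℝ (Fin n)) with hz
    have hφg : ∀ x, g (φ x) = ⟪x, w⟫ := by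
      intro x
      rw [hgdec, hw, inner_sum]
      refine Finset.sum_congr rfl fun v _ => ?_
      rw [real_inner_smul_right]
      simp only [φ]; ring
    have hA : ‖w‖ < u₀ := by
      rcases eq_or_ne w 0 with h | h
      · have h0 := hg1 (φ 0) ⟨0, by simp, rfl⟩
        rw [hφg] at h0
        simp only [inner_zero_left] at h0
        rw [h, norm_zero]; exact h0
      · have hx : ‖w‖⁻¹ • w ∈ Metric.closedBall (0 : EuclideanSpace ℝ (Fin m)) 1 := by
          rw [Metric.mem_closedBall, dist_zero_right, norm_smul, norm_inv, norm_norm]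
          rw [inv_mul_cancel₀ (norm_ne_zero_iff.2 h)]
        have h0 := hg1 (φ (‖w‖⁻¹ • w)) ⟨_, hx, rfl⟩
        rw [hφg, real_inner_smul_left, real_inner_self_eq_norm_sq] at h0
        have : ‖w‖⁻¹ * ‖w‖ ^ 2 = ‖w‖ := by
          rw [pow_two, ← mul_assoc, inv_mul_cancel₀ (norm_ne_zero_iff.2 h), one_mul]
        rwa [this] at h0
    -- the point of S2 minimizing g
    have hsign : ∀ t : ℝ, t * Real.sign t = |t| := by
      intro t
      rcases lt_trichotomy t 0 with h | h | h
      · rw [Real.sign_of_neg h, abs_of_neg h]; ring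
      · simp [h]
      · rw [Real.sign_of_pos h, abs_of_pos h]; ring
    have hsign1 : ∀ t : ℝ, |Real.sign t| ≤ 1 := by
      intro t
      rcases lt_trichotomy t 0 with h | h | h
      · rw [Real.sign_of_neg h]; norm_num
      · simp [h]
      · rw [Real.sign_of_pos h]; norm_num
    set ystar : ι → ℝ := fun v => b v - c v * Real.sign (μ v) with hystar
    have hyS2 : ystar ∈ S2 := by
      intro v
      simp only [hystar, sub_sub_cancel_left, abs_neg, abs_mul]
      calc |c v| * |Real.sign (μ v)| ≤ |c v| * 1 :=
            mul_le_mul_of_nonneg_left (hsign1 _) (abs_nonneg _)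
        _ = c v := by rw [mul_one, abs_of_pos (hcpos v)]
    have hB : v₀ < ∑ v : ι, b v * μ v - ∑ v : ι, c v * |μ v| := by
      have h0 := hg2 ystar hyS2
      rw [hgdec] at h0
      have : ∑ v : ι, ystar v * μ v = ∑ v : ι, b v * μ v - ∑ v : ι, c v * |μ v| := by
        rw [← Finset.sum_sub_distrib]
        refine Finset.sum_congr rfl fun v _ => ?_
        simp only [hystar]
        linear_combination (-(c v)) * hsign (μ v)
      rwa [this] at h0
    -- key geometric inequality
    set S0 : ℝ := ∑ v : ι, |μ v| with hS0
    set S2' : ℝ := ∑ v : ι, |μ v| * ‖(v.1 : EuclideanSpace ℝ (Fin n))‖ ^ 2 with hS2'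
    have hS0nn : 0 ≤ S0 := Finset.sum_nonneg fun v _ => abs_nonneg _
    have hS2nn : 0 ≤ S2' := Finset.sum_nonneg fun v _ => by positivity
    let i₀ : ι := ⟨0, h0s⟩
    set ν : ι → ℝ := fun v => μ v - (if v = i₀ then ∑ j : ι, μ j else 0) with hν
    have hνsum : ∑ v : ι, ν v = 0 := by
      simp only [hν, Finset.sum_sub_distrib, Finset.sum_ite_eq' Finset.univ i₀,
        Finset.mem_univ, if_true, sub_self]
    have hzν : z = ∑ v : ι, ν v • (v.1 : EuclideanSpace ℝ (Fin n)) := by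
      rw [hz]
      refine Finset.sum_congr rfl fun v _ => ?_
      by_cases h : v = i₀
      · have : (v.1 : EuclideanSpace ℝ (Fin n)) = 0 := by rw [h]
        rw [this, smul_zero, smul_zero]
      · simp [hν, h]
    have hwν : w = ∑ v : ι, ν v • f v.1 := by
      rw [hw]
      refine Finset.sum_congr rfl fun v _ => ?_
      by_cases h : v = i₀
      · have : (v.1 : EuclideanSpace ℝ (Fin n)) = 0 := by rw [h]
        rw [this, hf0, smul_zero, smul_zero]
      · simp [hν, h]
    have hmem : ∀ v : ι, (v.1 : EuclideanSpace ℝ (Fin n)) ∈ X := fun v =>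
      hXfin.mem_toFinset.1 v.2
    have hcomp := compare' ν (fun v : ι => (v.1 : EuclideanSpace ℝ (Fin n)))
      (fun v : ι => f v.1) hνsum hε.le
      (fun i j => hf i.1 (hmem i) j.1 (hmem j))
    rw [← hzν, ← hwν] at hcomp
    beta_reduce at hcomp
    have hT0 : ∑ v : ι, |ν v| ≤ 2 * S0 := by
      have hterm : ∀ v : ι, |ν v| ≤ |μ v| + (if v = i₀ then |∑ j : ι, μ j| else 0) := by
        intro v
        by_cases h : v = i₀
        · simp only [hν, h, if_true]
          calc |μ i₀ - ∑ j : ι, μ j| = |μ i₀ + -(∑ j : ι, μ j)| := by rw [sub_eq_add_neg]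
            _ ≤ |μ i₀| + |-(∑ j : ι, μ j)| := abs_add_le _ _
            _ = |μ i₀| + |∑ j : ι, μ j| := by rw [abs_neg]
        · simp [hν, h]
      calc ∑ v : ι, |ν v| ≤ ∑ v : ι, (|μ v| + if v = i₀ then |∑ j : ι, μ j| else 0) :=
            Finset.sum_le_sum fun v _ => hterm v
        _ = S0 + |∑ j : ι, μ j| := by
            rw [Finset.sum_add_distrib, Finset.sum_ite_eq' Finset.univ i₀]
            simp [hS0]
        _ ≤ S0 + S0 := by
            have : |∑ j : ι, μ j| ≤ S0 := by
              rw [hS0]; exact Finset.abs_sum_le_sum_abs _ _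
            linarith
        _ = 2 * S0 := by ring
    have hT2 : ∑ v : ι, |ν v| * ‖(v.1 : EuclideanSpace ℝ (Fin n))‖ ^ 2 = S2' := by
      rw [hS2']
      refine Finset.sum_congr rfl fun v _ => ?_
      by_cases h : v = i₀
      · have : (v.1 : EuclideanSpace ℝ (Fin n)) = 0 := by rw [h]
        rw [this, norm_zero]; ring
      · simp [hν, h]
    have hT2nn : 0 ≤ ∑ v : ι, |ν v| * ‖(v.1 : EuclideanSpace ℝ (Fin n))‖ ^ 2 := by
      rw [hT2]; exact hS2nn
    have hT0nn : 0 ≤ ∑ v : ι, |ν v| := Finset.sum_nonneg fun v _ => abs_nonneg _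
    have hzw : ‖z‖ ^ 2 ≤ ‖w‖ ^ 2 + 12 * ε * S0 * S2' := by
      have h6 : 6 * ε * (∑ v : ι, |ν v|) * (∑ v : ι, |ν v| * ‖(v.1 : EuclideanSpace ℝ (Fin n))‖ ^ 2)
          ≤ 12 * ε * S0 * S2' := by
        rw [hT2]
        have := mul_le_mul_of_nonneg_right (mul_le_mul_of_nonneg_left hT0
          (by linarith : (0:ℝ) ≤ 6 * ε)) hS2nn
        calc 6 * ε * (∑ v : ι, |ν v|) * S2' ≤ 6 * ε * (2 * S0) * S2' := this
          _ = 12 * ε * S0 * S2' := by ring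
      linarith [hcomp]
    set R : ℝ := ∑ v : ι, c v * |μ v| with hR
    have hRval : R = 3 * Real.sqrt ε * (S2' + S0) := by
      have e : ∀ v : ι, c v * |μ v|
          = 3 * Real.sqrt ε * (|μ v| * ‖(v.1 : EuclideanSpace ℝ (Fin n))‖ ^ 2)
            + 3 * Real.sqrt ε * |μ v| := fun v => by simp only [c]; ring
      rw [hR]
      simp_rw [e]
      rw [Finset.sum_add_distrib, ← Finset.mul_sum, ← Finset.mul_sum, hS2', hS0]
      ring
    have hRnn : 0 ≤ R := Finset.sum_nonneg fun v _ => by positivity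
    have hsq : 12 * ε * S0 * S2' ≤ R ^ 2 := by
      rw [hRval]
      have hεsq : Real.sqrt ε ^ 2 = ε := Real.sq_sqrt hε.le
      nlinarith [sq_nonneg (S0 - S2'), sq_nonneg (S0 + S2')]
    have hznorm : ‖z‖ ≤ ‖w‖ + R := by
      nlinarith [norm_nonneg z, norm_nonneg w, hRnn, hzw, hsq]
    -- contradiction
    have hD : ∑ v : ι, b v * μ v ≤ ‖z‖ := by
      have : ∑ v : ι, b v * μ v = ⟪u, z⟫ := by
        rw [hz, inner_sum]
        refine Finset.sum_congr rfl fun v _ => ?_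
        rw [real_inner_smul_right]
        simp only [b]; ring
      rw [this]
      calc ⟪u, z⟫ ≤ ‖u‖ * ‖z‖ := real_inner_le_norm u z
        _ ≤ 1 * ‖z‖ := mul_le_mul_of_nonneg_right hu (norm_nonneg z)
        _ = ‖z‖ := one_mul _
    linarith
  obtain ⟨y, ⟨x, hx, rfl⟩, hy2⟩ := hmain
  rw [Metric.mem_closedBall, dist_zero_right] at hx
  refine ⟨x, hx, fun v hv => ?_⟩
  have := hy2 ⟨v, hXfin.mem_toFinset.2 hv⟩
  simpa [φ, b, c] using this
end

section
/- There exists ε₀ > 0 such that for every ε ∈ (0, ε₀) the following holds. Let x₁ < x₂ < … < x_n be real numbers and let f : {x₁,…,x_n} → ℝ be injective with (1 − ε)|x_i − x_j| ≤ |f(x_i) − f(x_j)| ≤ (1 + ε)|x_i − x_j| for all i, j. Then there do NOT exist indices i < j < k < l with f(x_k) < f(x_i) < f(x_l) < f(x_j), and there do NOT exist indices i < j < k < l with f(x_j) < f(x_l) < f(x_i) < f(x_k). (Equivalently, the permutation π_f ∈ S_n recording the order of the images contains neither (3 1 4 2) nor (2 4 1 3) as a sub-permutation.) -/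
private lemma key_contra {ε a b c d fa fb fc fd : ℝ} (hε : 0 < ε) (hε4 : ε < 1/4)
    (hab : a < b) (hbc : b < c) (hcd : c < d)
    (h1 : (1 - ε) * (b - a) ≤ fb - fa)
    (h1' : fb - fa ≤ (1 + ε) * (b - a))
    (h2 : (1 - ε) * (c - a) ≤ fa - fc)
    (h3 : fb - fc ≤ (1 + ε) * (c - b))
    (h4 : (1 - ε) * (d - b) ≤ fb - fd)
    (h5 : fa < fd) : False := by
  have hp : 0 < b - a := by linarith
  have hq : 0 < c - b := by linarith
  have hr : 0 < d - c := by linarith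
  -- (1-ε)(b-a) ≤ ε(c-b)
  have hA : (1 - ε) * (b - a) ≤ ε * (c - b) := by nlinarith
  -- (1-ε)(d-b) ≤ (1+ε)(b-a)
  have hB : (1 - ε) * (d - b) ≤ (1 + ε) * (b - a) := by linarith
  nlinarith [mul_le_mul_of_nonneg_left hA (by linarith : (0:ℝ) ≤ 1 + ε),
    mul_le_mul_of_nonneg_left hB (by linarith : (0:ℝ) ≤ 1 - ε),
    mul_pos hq hr, sq_nonneg (1 - ε), mul_pos hp hq]

private lemma no3142 {ε : ℝ} (hε : 0 < ε) (hε4 : ε < 1/4) {n : ℕ} {x : Fin n → ℝ}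
    (hx : StrictMono x) {f : ℝ → ℝ}
    (hf : ∀ i j : Fin n,
          (1 - ε) * |x i - x j| ≤ |f (x i) - f (x j)| ∧
          |f (x i) - f (x j)| ≤ (1 + ε) * |x i - x j|) :
    ¬ ∃ i j k l : Fin n, i < j ∧ j < k ∧ k < l ∧
        f (x k) < f (x i) ∧ f (x i) < f (x l) ∧ f (x l) < f (x j) := by
  rintro ⟨i, j, k, l, hij, hjk, hkl, o1, o2, o3⟩
  have hab : x i < x j := hx hij
  have hbc : x j < x k := hx hjk
  have hcd : x k < x l := hx hkl
  have e1 : |x j - x i| = x j - x i := abs_of_pos (by linarith)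
  have e2 : |x i - x k| = x k - x i := by rw [abs_sub_comm]; exact abs_of_pos (by linarith)
  have e3 : |x j - x k| = x k - x j := by rw [abs_sub_comm]; exact abs_of_pos (by linarith)
  have e4 : |x j - x l| = x l - x j := by rw [abs_sub_comm]; exact abs_of_pos (by linarith)
  have g1 : |f (x j) - f (x i)| = f (x j) - f (x i) := abs_of_pos (by linarith)
  have g2 : |f (x i) - f (x k)| = f (x i) - f (x k) := abs_of_pos (by linarith)
  have g3 : |f (x j) - f (x k)| = f (x j) - f (x k) := abs_of_pos (by linarith)
  have g4 : |f (x j) - f (x l)| = f (x j) - f (x l) := abs_of_pos (by linarith)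
  have h1 := (hf j i).1; rw [e1, g1] at h1
  have h1' := (hf j i).2; rw [e1, g1] at h1'
  have h2 := (hf i k).1; rw [e2, g2] at h2
  have h3 := (hf j k).2; rw [e3, g3] at h3
  have h4 := (hf j l).1; rw [e4, g4] at h4
  exact key_contra hε hε4 hab hbc hcd h1 h1' h2 h3 h4 o2

/-- **Forbidden patterns for near-isometric maps of the line.** For all sufficiently small
`ε > 0`, if `x₁ < ⋯ < xₙ` and `f` satisfies `(1-ε)|xᵢ-xⱼ| ≤ |f xᵢ - f xⱼ| ≤ (1+ε)|xᵢ-xⱼ|`,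
then the order pattern of the images contains neither `(3 1 4 2)` nor `(2 4 1 3)`:
there are no `i < j < k < l` with `f xₖ < f xᵢ < f xₗ < f xⱼ`, and none with
`f xⱼ < f xₗ < f xᵢ < f xₖ`. -/
theorem no_bad_subpermutation :
    ∃ ε₀ > (0 : ℝ), ∀ ε : ℝ, 0 < ε → ε < ε₀ →
      ∀ (n : ℕ) (x : Fin n → ℝ), StrictMono x → ∀ f : ℝ → ℝ,
        (∀ i j : Fin n,
          (1 - ε) * |x i - x j| ≤ |f (x i) - f (x j)| ∧
          |f (x i) - f (x j)| ≤ (1 + ε) * |x i - x j|) →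
        (¬ ∃ i j k l : Fin n, i < j ∧ j < k ∧ k < l ∧
            f (x k) < f (x i) ∧ f (x i) < f (x l) ∧ f (x l) < f (x j)) ∧
        (¬ ∃ i j k l : Fin n, i < j ∧ j < k ∧ k < l ∧
            f (x j) < f (x l) ∧ f (x l) < f (x i) ∧ f (x i) < f (x k)) := by
  refine ⟨1/4, by norm_num, fun ε hε hε4 n x hx f hf => ?_⟩
  constructor
  · exact no3142 hε hε4 hx hf
  · have hg : ∀ i j : Fin n,
        (1 - ε) * |x i - x j| ≤ |(fun t => -f t) (x i) - (fun t => -f t) (x j)| ∧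
        |(fun t => -f t) (x i) - (fun t => -f t) (x j)| ≤ (1 + ε) * |x i - x j| := by
      intro i j
      have : |(fun t => -f t) (x i) - (fun t => -f t) (x j)| = |f (x i) - f (x j)| := by
        rw [abs_sub_comm]; congr 1; ring
      rw [this]; exact hf i j
    have := no3142 (f := fun t => -f t) hε hε4 hx hg
    rintro ⟨i, j, k, l, hij, hjk, hkl, o1, o2, o3⟩
    exact this ⟨i, j, k, l, hij, hjk, hkl, by simp; linarith, by simp; linarith, by simp; linarith⟩
end

section
/- Let ε ∈ (0, 1), let X ⊂ ℝ, and let f : X → ℝ satisfy (1 − ε)|x − y| ≤ |f(x) − f(y)| ≤ (1 + ε)|x − y| for all x, y ∈ X. Suppose p, u, v ∈ X satisfy p < u ≤ v and f(p) < f(v) < f(u). Then v − u ≤ ε·(u − p)/(1 − ε). (Consequently, when ε ≤ 1/2, the 'flipped' pair u, v is separated from p by at least (1 − ε)(v − u)/ε ≥ (v − u)/(2ε).) -/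
/-- **Separation of flipped points.** If `f` is a `(1 ± ε)`-near isometry on `X ⊆ ℝ`,
`p, u, v ∈ X` with `p < u ≤ v`, and the pair `u, v` is flipped over `p`
(`f p < f v < f u`), then `v - u ≤ ε (u - p) / (1 - ε)`. -/
theorem flip_separation (ε : ℝ) (hε : 0 < ε) (hε1 : ε < 1) (X : Set ℝ) (f : ℝ → ℝ)
    (hf : ∀ x ∈ X, ∀ y ∈ X,
      (1 - ε) * |x - y| ≤ |f x - f y| ∧ |f x - f y| ≤ (1 + ε) * |x - y|)
    (p u v : ℝ) (hp : p ∈ X) (hu : u ∈ X) (hv : v ∈ X)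
    (hpu : p < u) (huv : u ≤ v) (h1 : f p < f v) (h2 : f v < f u) :
    v - u ≤ ε * (u - p) / (1 - ε) := by
  have A := (hf v hv u hu).1
  have B := (hf u hu p hp).2
  have C := (hf v hv p hp).1
  rw [abs_of_nonneg (by linarith), abs_of_neg (by linarith)] at A
  rw [abs_of_pos (by linarith), abs_of_pos (by linarith)] at B
  rw [abs_of_pos (by linarith), abs_of_pos (by linarith)] at C
  rw [le_div_iff₀ (by linarith : (0:ℝ) < 1 - ε)]
  nlinarith
end

section
/- Let ε > 0, let X ⊆ ℝ^n contain 0, and let f : X → ℝ^m satisfy f(0) = 0 and ‖v − w‖² ≤ ‖f(v) − f(w)‖² ≤ (1 + 3ε)‖v − w‖² for all v, w ∈ X. Then for all v, w ∈ X: |⟨v, w⟩ − ⟨f(v), f(w)⟩| ≤ 3ε·(‖v‖² + ‖w‖²). -/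
open scoped RealInnerProductSpace

/-- **Near-isometries approximately preserve inner products.** Let `ε > 0`, let `X ⊆ ℝⁿ`
contain `0`, and let `f : X → ℝᵐ` satisfy `f 0 = 0` and
`‖v - w‖² ≤ ‖f v - f w‖² ≤ (1 + 3ε)‖v - w‖²` on `X`. Then for all `v, w ∈ X`,
`|⟪v, w⟫ - ⟪f v, f w⟫| ≤ 3ε (‖v‖² + ‖w‖²)`. -/
theorem inner_product_approx_preserved {n m : ℕ} (ε : ℝ) (hε : 0 < ε)
    (X : Set (EuclideanSpace ℝ (Fin n))) (h0X : (0 : EuclideanSpace ℝ (Fin n)) ∈ X)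
    (f : EuclideanSpace ℝ (Fin n) → EuclideanSpace ℝ (Fin m)) (hf0 : f 0 = 0)
    (hf : ∀ v ∈ X, ∀ w ∈ X,
      ‖v - w‖ ^ 2 ≤ ‖f v - f w‖ ^ 2 ∧ ‖f v - f w‖ ^ 2 ≤ (1 + 3 * ε) * ‖v - w‖ ^ 2) :
    ∀ v ∈ X, ∀ w ∈ X,
      |⟪v, w⟫ - ⟪f v, f w⟫| ≤ 3 * ε * (‖v‖ ^ 2 + ‖w‖ ^ 2) := by
  intro v hv w hw
  obtain ⟨h1, h2⟩ := hf v hv w hw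
  obtain ⟨h3, h4⟩ := hf v hv 0 h0X
  obtain ⟨h5, h6⟩ := hf w hw 0 h0X
  rw [hf0, sub_zero, sub_zero] at h3 h4 h5 h6
  have pv : ⟪v, w⟫ = (‖v‖ ^ 2 + ‖w‖ ^ 2 - ‖v - w‖ ^ 2) / 2 := by
    have := @norm_sub_sq_real (EuclideanSpace ℝ (Fin n)) _ _ v w
    linarith
  have pf : ⟪f v, f w⟫ = (‖f v‖ ^ 2 + ‖f w‖ ^ 2 - ‖f v - f w‖ ^ 2) / 2 := by
    have := @norm_sub_sq_real (EuclideanSpace ℝ (Fin m)) _ _ (f v) (f w)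
    linarith
  have hvw : ‖v - w‖ ^ 2 ≤ 2 * (‖v‖ ^ 2 + ‖w‖ ^ 2) := by
    have := @norm_sub_sq_real (EuclideanSpace ℝ (Fin n)) _ _ v w
    nlinarith [abs_real_inner_le_norm v w, abs_nonneg ⟪v, w⟫, neg_abs_le ⟪v, w⟫,
      sq_nonneg (‖v‖ - ‖w‖)]
  rw [abs_le]
  have h7 : (0:ℝ) ≤ ‖v - w‖ ^ 2 := sq_nonneg _
  have h8 : (0:ℝ) ≤ ‖v‖ ^ 2 := sq_nonneg _
  have h9 : (0:ℝ) ≤ ‖w‖ ^ 2 := sq_nonneg _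
  constructor <;> nlinarith
end
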